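/- For every α ≥ 1 there is a constant c = c(α) such that for all v, w ∈ ℝ: |v - w|^{α+1} ≤ c · 𝔟_α[v,w]. -/

import Mathlib

open Real

private lemma aux_superadd {x y p : ℝ} (hx : 0 ≤ x) (hy : 0 ≤ y) (hp : 1 ≤ p) :
    x ^ p + y ^ p ≤ (x + y) ^ p := by
  lift x to NNReal using hx
  lift y to NNReal using hy
  exact_mod_cast NNReal.add_rpow_le_rpow_add x y hp

private lemma aux_convex {x y p : ℝ} (hx : 0 ≤ x) (hy : 0 ≤ y) (hp : 1 ≤ p) :
    (x + y) ^ p ≤ (2 : ℝ) ^ (p - 1) * (x ^ p + y ^ p) := by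
  lift x to NNReal using hx
  lift y to NNReal using hy
  exact_mod_cast NNReal.rpow_add_le_mul_rpow_add_rpow x y hp

private lemma sp_eq {α x : ℝ} (hα : 1 ≤ α) (hx : 0 ≤ x) :
    |x| ^ (α - 1) * x = x ^ α := by
  rw [abs_of_nonneg hx]
  rcases eq_or_lt_of_le hx with h | h
  · subst h
    rcases eq_or_lt_of_le hα with h1 | h1
    · simp [← h1]
    · rw [Real.zero_rpow (by linarith), Real.zero_rpow (by linarith), mul_zero]
  · rw [← Real.rpow_add_one h.ne']
    ring_nf

private lemma sp_neg {α x : ℝ} (hx : x ≤ 0) (hα : 1 ≤ α) :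
    |x| ^ (α - 1) * x = -((-x) ^ α) := by
  have := sp_eq hα (neg_nonneg.mpr hx) (x := -x)
  rw [abs_neg] at this
  nlinarith [this]

private lemma key_mono {α : ℝ} (hα : 1 ≤ α) {a b : ℝ} (hba : b ≤ a) :
    (2 : ℝ) ^ (1 - α) * (a - b) ^ α ≤ |a| ^ (α - 1) * a - |b| ^ (α - 1) * b := by
  have h2le1 : (2 : ℝ) ^ (1 - α) ≤ 1 :=
    Real.rpow_le_one_of_one_le_of_nonpos one_le_two (by linarith)
  have hab0 : (0 : ℝ) ≤ a - b := by linarith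
  have habp : (0 : ℝ) ≤ (a - b) ^ α := Real.rpow_nonneg hab0 α
  rcases le_or_gt 0 b with hb | hb
  · have ha : 0 ≤ a := le_trans hb hba
    rw [sp_eq hα ha, sp_eq hα hb]
    have h1 : (a - b) ^ α + b ^ α ≤ a ^ α := by
      have := aux_superadd hab0 hb hα
      rwa [sub_add_cancel] at this
    nlinarith [mul_le_of_le_one_left habp h2le1]
  · rcases le_or_gt a 0 with ha | ha
    · rw [sp_neg hb.le hα, sp_neg ha hα]
      have h1 : (a - b) ^ α + (-a) ^ α ≤ (-b) ^ α := by
        have := aux_superadd hab0 (neg_nonneg.mpr ha) hα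
        have e : a - b + -a = -b := by ring
        rwa [e] at this
      nlinarith [mul_le_of_le_one_left habp h2le1]
    · rw [sp_eq hα ha.le, sp_neg hb.le hα]
      have h1 : (a + -b) ^ α ≤ (2 : ℝ) ^ (α - 1) * (a ^ α + (-b) ^ α) :=
        aux_convex ha.le (by linarith) hα
      have e1 : (2 : ℝ) ^ (1 - α) * (2 : ℝ) ^ (α - 1) = 1 := by
        rw [← Real.rpow_add two_pos]; norm_num
      have h2pos : (0 : ℝ) < (2 : ℝ) ^ (1 - α) := Real.rpow_pos_of_pos two_pos _
      have h3 : (2 : ℝ) ^ (1 - α) * (a + -b) ^ α ≤ a ^ α + (-b) ^ α := by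
        have := mul_le_mul_of_nonneg_left h1 h2pos.le
        rwa [← mul_assoc, e1, one_mul] at this
      have e2 : a - b = a + -b := by ring
      rw [e2]
      linarith

private lemma myHasDerivAt_abs_rpow {α : ℝ} (hα : 1 ≤ α) (t : ℝ) :
    HasDerivAt (fun t : ℝ => |t| ^ (α + 1)) ((α + 1) * (|t| ^ (α - 1) * t)) t := by
  have h2 : (1 : ℝ) ≤ (α + 1) / 2 := by linarith
  have h := (Real.hasDerivAt_rpow_const (x := t ^ 2) (p := (α + 1) / 2)
      (Or.inr h2)).comp t (hasDerivAt_pow 2 t)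
  have key : ∀ u : ℝ, ∀ q : ℝ, ((u : ℝ) ^ 2) ^ (q / 2) = |u| ^ q := by
    intro u q
    rw [← sq_abs, ← Real.rpow_natCast |u| 2, ← Real.rpow_mul (abs_nonneg u)]
    norm_num
    congr 1
    ring
  simp only [Function.comp_def] at h
  have e1 : (fun x : ℝ => (x ^ 2) ^ ((α + 1) / 2)) = fun x : ℝ => |x| ^ (α + 1) := by
    funext x; exact key x (α + 1)
  rw [e1] at h
  refine h.congr_deriv ?_
  have e2 : (α + 1) / 2 - 1 = (α - 1) / 2 := by ring
  rw [e2, key t (α - 1)]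
  push_cast
  ring

private lemma bregman_lower_aux {α : ℝ} (hα : 1 ≤ α) (s : ℝ) :
    ∀ t, s ≤ t →
      (2 : ℝ) ^ (1 - α) * |t - s| ^ (α + 1) ≤
        |t| ^ (α + 1) - |s| ^ (α + 1) - (α + 1) * (|s| ^ (α - 1) * s) * (t - s) := by
  set c : ℝ := (2 : ℝ) ^ (1 - α) with hc
  set F : ℝ → ℝ := fun t =>
    |t| ^ (α + 1) - (α + 1) * (|s| ^ (α - 1) * s) * t - c * |t - s| ^ (α + 1) with hF
  have hderiv : ∀ t : ℝ, HasDerivAt F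
      ((α + 1) * (|t| ^ (α - 1) * t) - (α + 1) * (|s| ^ (α - 1) * s)
        - c * ((α + 1) * (|t - s| ^ (α - 1) * (t - s)))) t := by
    intro t
    have h1 := myHasDerivAt_abs_rpow hα t
    have h2 := (myHasDerivAt_abs_rpow hα (t - s)).comp t ((hasDerivAt_id t).sub_const s)
    have h3 : HasDerivAt (fun x : ℝ => (α + 1) * (|s| ^ (α - 1) * s) * x)
        ((α + 1) * (|s| ^ (α - 1) * s)) t := by
      simpa using (hasDerivAt_id t).const_mul ((α + 1) * (|s| ^ (α - 1) * s))
    have := (h1.sub h3).sub ((h2.const_mul c))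
    refine this.congr_deriv ?_
    simp only [mul_one]
  have hmono : MonotoneOn F (Set.Ici s) := by
    apply monotoneOn_of_deriv_nonneg (convex_Ici s)
    · exact fun x _ => (hderiv x).continuousAt.continuousWithinAt
    · intro x _
      exact (hderiv x).differentiableAt.differentiableWithinAt
    · intro x hx
      rw [(hderiv x).deriv]
      rw [interior_Ici] at hx
      have hxs : s ≤ x := le_of_lt hx
      have h1 := key_mono hα hxs
      have h2 : |x - s| ^ (α - 1) * (x - s) = (x - s) ^ α := by
        rw [sp_eq hα (by linarith)]
      rw [h2]
      have hp1 : (0 : ℝ) < α + 1 := by linarith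
      nlinarith [h1, hp1]
  intro t ht
  have := hmono (Set.self_mem_Ici) (Set.mem_Ici.mpr ht) ht
  simp only [hF] at this
  rw [sub_self, abs_zero, Real.zero_rpow (by linarith : α + 1 ≠ 0), mul_zero] at this
  nlinarith [this]

private lemma bregman_lower {α : ℝ} (hα : 1 ≤ α) (s t : ℝ) :
    (2 : ℝ) ^ (1 - α) * |t - s| ^ (α + 1) ≤
      |t| ^ (α + 1) - |s| ^ (α + 1) - (α + 1) * (|s| ^ (α - 1) * s) * (t - s) := by
  rcases le_total s t with h | h
  · exact bregman_lower_aux hα s t h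
  · have := bregman_lower_aux hα (-s) (-t) (by linarith)
    have e1 : (-t) - (-s) = -(t - s) := by ring
    rw [e1, abs_neg, abs_neg, abs_neg] at this
    have e : (α + 1) * (|s| ^ (α - 1) * -s) * -(t - s)
        = (α + 1) * (|s| ^ (α - 1) * s) * (t - s) := by ring
    rwa [e] at this

theorem diff_pow_le_bregman (α : ℝ) (hα : 1 ≤ α) :
    ∃ c : ℝ, 0 < c ∧ ∀ v w : ℝ,
      |v - w| ^ (α + 1) ≤
        c * ((1 / (α + 1)) * (|w| ^ (α + 1) - |v| ^ (α + 1)) +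
          (|v| ^ (α - 1) * v) * (v - w)) := by
  have hp : (0 : ℝ) < α + 1 := by linarith
  have h2pos : (0 : ℝ) < (2 : ℝ) ^ (α - 1) := Real.rpow_pos_of_pos two_pos _
  refine ⟨(α + 1) * (2 : ℝ) ^ (α - 1), by positivity, fun v w => ?_⟩
  have h := bregman_lower hα v w
  rw [show w - v = -(v - w) by ring, abs_neg] at h
  have e1 : (2 : ℝ) ^ (α - 1) * (2 : ℝ) ^ (1 - α) = 1 := by
    rw [← Real.rpow_add two_pos]; norm_num
  have h2 := mul_le_mul_of_nonneg_left h h2pos.le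
  calc |v - w| ^ (α + 1)
      = (2 : ℝ) ^ (α - 1) * ((2 : ℝ) ^ (1 - α) * |v - w| ^ (α + 1)) := by
        rw [← mul_assoc, e1, one_mul]
    _ ≤ (2 : ℝ) ^ (α - 1) * (|w| ^ (α + 1) - |v| ^ (α + 1)
          - (α + 1) * (|v| ^ (α - 1) * v) * (-(v - w))) := h2
    _ = (α + 1) * (2 : ℝ) ^ (α - 1) *
          ((1 / (α + 1)) * (|w| ^ (α + 1) - |v| ^ (α + 1)) +
            (|v| ^ (α - 1) * v) * (v - w)) := by
        field_simp
        ring
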